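/- Let n ≥ 2 and 2 ≤ r ≤ n with r dividing n, let G = ℤ_{rn²}, and set S = {rn·i : 0 ≤ i < n}, T = {(r−1)·i : 0 ≤ i < n}, U = {r·i : 0 ≤ i < n}. Then the number of 6-tuples (s₁,s₂,t₁,t₂,u₁,u₂) ∈ S² × T² × U² satisfying s₁ − s₂ + t₁ − t₂ = u₁ − u₂ in ℤ_{rn²} equals n³·(n/r). In other words, ρ_{n,G}(S,T,U) = n³·⌊n/r⌋. -/

import Mathlib

namespace Statement4Aux

/-- `d` index from `c` and `j`. -/
def dd (r c j : ℕ) : ℕ := c % r + r * j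

/-- integer `m = (c - d)/r`. -/
def mZ (r c j : ℕ) : ℤ := (c / r : ℕ) - (j : ℤ)

/-- `e` index. -/
def ee (n r c j f : ℕ) : ℕ := (((f : ℤ) + ((r : ℤ) - 1) * mZ r c j) % (n : ℤ)).toNat

/-- `a` index. -/
def aa (n r c j f b : ℕ) : ℕ :=
  (((b : ℤ) + (((ee n r c j f : ℤ) - (f : ℤ) - ((r : ℤ) - 1) * mZ r c j) / (n : ℤ))) % (n : ℤ)).toNat

lemma sub_dd (r c j : ℕ) : (c : ℤ) - dd r c j = r * mZ r c j := by
  have h := Nat.div_add_mod c r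
  zify at h
  simp only [dd, mZ]
  push_cast
  linarith [h]

lemma ee_cast (n r c j f : ℕ) (hn : 0 < n) :
    ((ee n r c j f : ℕ) : ℤ) = ((f : ℤ) + ((r : ℤ) - 1) * mZ r c j) % (n : ℤ) := by
  have hn' : (n : ℤ) ≠ 0 := by exact_mod_cast hn.ne'
  exact Int.toNat_of_nonneg (Int.emod_nonneg _ hn')

lemma ee_lt (n r c j f : ℕ) (hn : 0 < n) : ee n r c j f < n := by
  have hn' : (0 : ℤ) < n := by exact_mod_cast hn
  have h1 := Int.emod_nonneg ((f : ℤ) + ((r : ℤ) - 1) * mZ r c j) hn'.ne'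
  have h2 := Int.emod_lt_of_pos ((f : ℤ) + ((r : ℤ) - 1) * mZ r c j) hn'
  simp only [ee]
  omega

lemma aa_lt (n r c j f b : ℕ) (hn : 0 < n) : aa n r c j f b < n := by
  have hn' : (0 : ℤ) < n := by exact_mod_cast hn
  have h1 := Int.emod_nonneg ((b : ℤ) + (((ee n r c j f : ℤ) - (f : ℤ) - ((r : ℤ) - 1) * mZ r c j) / (n : ℤ))) hn'.ne'
  have h2 := Int.emod_lt_of_pos ((b : ℤ) + (((ee n r c j f : ℤ) - (f : ℤ) - ((r : ℤ) - 1) * mZ r c j) / (n : ℤ))) hn'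
  simp only [aa]
  omega

lemma dd_lt (n r c j : ℕ) (hr : 0 < r) (hj : j < n / r) (hq : r * (n / r) = n) :
    dd r c j < n := by
  have h1 : c % r < r := Nat.mod_lt _ hr
  have h2 : r * j + r ≤ r * (n / r) := by
    have hj1 : j + 1 ≤ n / r := hj
    calc r * j + r = r * (j + 1) := by ring
    _ ≤ r * (n / r) := Nat.mul_le_mul_left r hj1
  simp only [dd]
  omega

lemma forward (n r c j f b : ℕ) (hn : 0 < n) :
    ((r : ℤ) * (n : ℤ) ^ 2) ∣
      ((r : ℤ) * n * (aa n r c j f b) + ((r : ℤ) - 1) * c + r * f)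
        - ((r : ℤ) * n * b + ((r : ℤ) - 1) * (dd r c j) + r * (ee n r c j f)) := by
  have hn' : (n : ℤ) ≠ 0 := by exact_mod_cast hn.ne'
  set m := mZ r c j with hm
  set e := ee n r c j f with hedef
  have hdm : (c : ℤ) - dd r c j = r * m := sub_dd r c j
  have hec : (e : ℤ) = ((f : ℤ) + ((r : ℤ) - 1) * m) % (n : ℤ) := ee_cast n r c j f hn
  set w : ℤ := -(((f : ℤ) + ((r : ℤ) - 1) * m) / (n : ℤ)) with hwdef
  have hw2 : (e : ℤ) - f - ((r : ℤ) - 1) * m = n * w := by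
    have h3 := Int.mul_ediv_add_emod ((f : ℤ) + ((r : ℤ) - 1) * m) (n : ℤ)
    rw [hec, hwdef]; linarith [h3]
  have haw : (((e : ℤ) - (f : ℤ) - ((r : ℤ) - 1) * m) / (n : ℤ)) = w := by
    rw [hw2]; exact Int.mul_ediv_cancel_left _ hn'
  have hac : ((aa n r c j f b : ℕ) : ℤ) = ((b : ℤ) + w) % (n : ℤ) := by
    simp only [aa, ← hedef, ← hm, haw]
    exact Int.toNat_of_nonneg (Int.emod_nonneg _ hn')
  set a := aa n r c j f b with hadef
  set k : ℤ := -(((b : ℤ) + w) / (n : ℤ)) with hkdef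
  have hk : (a : ℤ) - b - w = n * k := by
    have h3 := Int.mul_ediv_add_emod ((b : ℤ) + w) (n : ℤ)
    rw [hac, hkdef]; linarith [h3]
  exact ⟨k, by linear_combination ((r : ℤ) - 1) * hdm - (r : ℤ) * hw2 + (r : ℤ) * (n : ℤ) * hk⟩

lemma backward (n r a b c d e f : ℕ) (hr : 2 ≤ r) (hn : 0 < n)
    (han : a < n) (hen : e < n)
    (h : ((r : ℤ) * (n : ℤ) ^ 2) ∣
      ((r : ℤ) * n * a + ((r : ℤ) - 1) * c + r * f)
        - ((r : ℤ) * n * b + ((r : ℤ) - 1) * d + r * e)) :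
    d % r = c % r ∧ dd r c (d / r) = d ∧ e = ee n r c (d / r) f ∧ a = aa n r c (d / r) f b := by
  obtain ⟨K, hK⟩ := h
  have hr0 : (0 : ℤ) < r := by exact_mod_cast lt_of_lt_of_le two_pos hr
  have hn0 : (0 : ℤ) < n := by exact_mod_cast hn
  have hrdvd : (r : ℤ) ∣ ((r : ℤ) - 1) * ((c : ℤ) - d) :=
    ⟨(n : ℤ) * ((b : ℤ) - a) + ((e : ℤ) - f) + (n : ℤ) ^ 2 * K, by linear_combination hK⟩
  have hcd : (r : ℤ) ∣ (c : ℤ) - d := by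
    have h2 : (r : ℤ) ∣ (r : ℤ) * ((c : ℤ) - d) := Dvd.intro _ rfl
    have h3 := dvd_sub h2 hrdvd
    have h4 : (r : ℤ) * ((c : ℤ) - d) - ((r : ℤ) - 1) * ((c : ℤ) - d) = (c : ℤ) - d := by ring
    rwa [h4] at h3
  have hmod : d % r = c % r := by
    have h5 : (c : ℤ) % r = (d : ℤ) % r :=
      Int.emod_eq_emod_iff_emod_sub_eq_zero.mpr (Int.emod_eq_zero_of_dvd hcd)
    have h6 : ((c % r : ℕ) : ℤ) = ((d % r : ℕ) : ℤ) := by push_cast; exact h5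
    exact_mod_cast h6.symm
  have hdd : dd r c (d / r) = d := by
    simp only [dd, ← hmod]
    exact Nat.mod_add_div d r
  set jj := d / r with hjj
  have hm : (c : ℤ) - d = r * mZ r c jj := by
    have h1 := Nat.div_add_mod c r
    have h2 := Nat.div_add_mod d r
    zify at h1 h2
    have h3 : ((d % r : ℕ) : ℤ) = ((c % r : ℕ) : ℤ) := by exact_mod_cast hmod
    simp only [mZ, hjj]
    push_cast
    linarith [h1, h2, h3]
  have hEr : (n : ℤ) * ((a : ℤ) - b) + ((r : ℤ) - 1) * (mZ r c jj) - ((e : ℤ) - f)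
      = (n : ℤ) ^ 2 * K := by
    apply mul_left_cancel₀ hr0.ne'
    linear_combination hK - ((r : ℤ) - 1) * hm
  set w : ℤ := (a : ℤ) - b - n * K with hwdef
  have hnw : (e : ℤ) - f - ((r : ℤ) - 1) * mZ r c jj = n * w := by
    rw [hwdef]; linear_combination -hEr
  have hee : e = ee n r c jj f := by
    have h1 : ((f : ℤ) + ((r : ℤ) - 1) * mZ r c jj) % n = (e : ℤ) := by
      have h2 : ((f : ℤ) + ((r : ℤ) - 1) * mZ r c jj) % n = (e : ℤ) % n := by
        apply Int.emod_eq_emod_iff_emod_sub_eq_zero.mpr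
        apply Int.emod_eq_zero_of_dvd
        exact ⟨-w, by linear_combination -hnw⟩
      rw [h2, Int.emod_eq_of_lt (by positivity) (by exact_mod_cast hen)]
    simp only [ee, h1, Int.toNat_natCast]
  have hdiv : (((ee n r c jj f : ℕ) : ℤ) - f - ((r : ℤ) - 1) * mZ r c jj) / n = w := by
    rw [← hee, hnw]
    exact Int.mul_ediv_cancel_left _ hn0.ne'
  have haa : a = aa n r c jj f b := by
    simp only [aa, hdiv]
    have h2 : ((b : ℤ) + w) % n = (a : ℤ) % n := by
      apply Int.emod_eq_emod_iff_emod_sub_eq_zero.mpr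
      apply Int.emod_eq_zero_of_dvd
      exact ⟨-K, by rw [hwdef]; ring⟩
    rw [h2, Int.emod_eq_of_lt (by positivity) (by exact_mod_cast han), Int.toNat_natCast]
  exact ⟨hmod, hdd, hee, haa⟩

lemma helper1 (N A B C D E F : ℕ)
    (h : (N : ℤ) ∣ ((A : ℤ) + C + F) - ((B : ℤ) + D + E)) :
    (A : ZMod N) - B + C - D = (E : ZMod N) - F := by
  obtain ⟨k, hk⟩ := h
  have hmeq : (A + C + F : ℕ) ≡ (B + D + E : ℕ) [MOD N] :=
    (Nat.modEq_iff_dvd).mpr ⟨-k, by push_cast; linear_combination -hk⟩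
  have h2 := (ZMod.natCast_eq_natCast_iff _ _ _).mpr hmeq
  push_cast at h2
  linear_combination h2

lemma helper2 (N A B C D E F : ℕ)
    (h : (A : ZMod N) - B + C - D = (E : ZMod N) - F) :
    (N : ℤ) ∣ ((A : ℤ) + C + F) - ((B : ℤ) + D + E) := by
  have h2 : ((A + C + F : ℕ) : ZMod N) = ((B + D + E : ℕ) : ZMod N) := by
    push_cast
    linear_combination h
  obtain ⟨k, hk⟩ := (Nat.modEq_iff_dvd).mp ((ZMod.natCast_eq_natCast_iff _ _ _).mp h2)
  exact ⟨-k, by push_cast at hk ⊢; linear_combination -hk⟩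

/-- forward parametrization map. -/
def imap (n r : ℕ) (x : ℕ × ℕ × ℕ × ℕ) :
    ZMod (r * n ^ 2) × ZMod (r * n ^ 2) × ZMod (r * n ^ 2) ×
      ZMod (r * n ^ 2) × ZMod (r * n ^ 2) × ZMod (r * n ^ 2) :=
  (((r * n * aa n r x.1 x.2.1 x.2.2.1 x.2.2.2 : ℕ) : ZMod (r * n ^ 2)),
   ((r * n * x.2.2.2 : ℕ) : ZMod (r * n ^ 2)),
   (((r - 1) * x.1 : ℕ) : ZMod (r * n ^ 2)),
   (((r - 1) * dd r x.1 x.2.1 : ℕ) : ZMod (r * n ^ 2)),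
   ((r * ee n r x.1 x.2.1 x.2.2.1 : ℕ) : ZMod (r * n ^ 2)),
   ((r * x.2.2.1 : ℕ) : ZMod (r * n ^ 2)))

/-- inverse map. -/
def jmap (n r : ℕ) (p : ZMod (r * n ^ 2) × ZMod (r * n ^ 2) × ZMod (r * n ^ 2) ×
      ZMod (r * n ^ 2) × ZMod (r * n ^ 2) × ZMod (r * n ^ 2)) : ℕ × ℕ × ℕ × ℕ :=
  (p.2.2.1.val / (r - 1), p.2.2.2.1.val / (r - 1) / r, p.2.2.2.2.2.val / r, p.2.1.val / (r * n))

end Statement4Aux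

open Statement4Aux

/-- For `2 ≤ r ≤ n` with `r ∣ n`, in `G = ℤ_{rn²}` with
`S = {rn·i : 0 ≤ i < n}`, `T = {(r-1)·i : 0 ≤ i < n}`, `U = {r·i : 0 ≤ i < n}`,
the number of 6-tuples `(s₁,s₂,t₁,t₂,u₁,u₂) ∈ S² × T² × U²` with
`s₁ - s₂ + t₁ - t₂ = u₁ - u₂` equals `n³·(n/r)`, i.e.
`ρ_{n,G}(S,T,U) = n³·⌊n/r⌋`. -/
theorem statement4 (n r : ℕ) (hn : 2 ≤ n) (hr : 2 ≤ r) (hrn : r ≤ n) (hdvd : r ∣ n)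
    (S T U : Finset (ZMod (r * n ^ 2)))
    (hS : S = (Finset.range n).image (fun i => ((r * n * i : ℕ) : ZMod (r * n ^ 2))))
    (hT : T = (Finset.range n).image (fun i => (((r - 1) * i : ℕ) : ZMod (r * n ^ 2))))
    (hU : U = (Finset.range n).image (fun i => ((r * i : ℕ) : ZMod (r * n ^ 2)))) :
    ((S ×ˢ S ×ˢ T ×ˢ T ×ˢ U ×ˢ U).filter
        (fun p : ZMod (r * n ^ 2) × ZMod (r * n ^ 2) × ZMod (r * n ^ 2) ×
            ZMod (r * n ^ 2) × ZMod (r * n ^ 2) × ZMod (r * n ^ 2) =>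
          p.1 - p.2.1 + p.2.2.1 - p.2.2.2.1 = p.2.2.2.2.1 - p.2.2.2.2.2)).card
      = n ^ 3 * (n / r) := by
  subst hS hT hU
  have hn0 : 0 < n := by omega
  have hr0 : 0 < r := by omega
  have hr1 : 1 ≤ r := by omega
  have hq : r * (n / r) = n := Nat.mul_div_cancel' hdvd
  haveI : NeZero (r * n ^ 2) := ⟨by positivity⟩
  have hnn : n ≤ n ^ 2 := by nlinarith
  have hrn2 : r * n ≤ r * n ^ 2 := Nat.mul_le_mul_left r hnn
  have hb1 : ∀ i : ℕ, i < n → r * n * i < r * n ^ 2 := by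
    intro i hi
    have h1 : r * n * i < r * n * n := mul_lt_mul_of_pos_left hi (by positivity)
    calc r * n * i < r * n * n := h1
    _ = r * n ^ 2 := by ring
  have hb3 : ∀ i : ℕ, i < n → r * i < r * n ^ 2 := by
    intro i hi
    have h1 : r * i < r * n := mul_lt_mul_of_pos_left hi hr0
    omega
  have hb2 : ∀ i : ℕ, i < n → (r - 1) * i < r * n ^ 2 := by
    intro i hi
    have h1 : (r - 1) * i ≤ r * i := Nat.mul_le_mul_right i (Nat.sub_le r 1)
    have h2 := hb3 i hi
    omega
  have hval : ∀ x : ℕ, x < r * n ^ 2 → ((x : ZMod (r * n ^ 2))).val = x :=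
    fun x hx => ZMod.val_natCast_of_lt hx
  trans (Finset.range n ×ˢ Finset.range (n / r) ×ˢ Finset.range n ×ˢ Finset.range n).card
  · refine Finset.card_nbij' (jmap n r) (imap n r) ?_ ?_ ?_ ?_
    · -- hi : jmap maps filter into A
      intro p hp
      simp only [Finset.mem_coe, Finset.mem_filter, Finset.mem_product, Finset.mem_image,
        Finset.mem_range] at hp
      obtain ⟨⟨⟨a, han, hpa⟩, ⟨b, hbn, hpb⟩, ⟨c, hcn, hpc⟩, ⟨d, hdn, hpd⟩,
        ⟨e, hen, hpe⟩, ⟨f, hfn, hpf⟩⟩, heq⟩ := hp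
      simp only [jmap, Finset.mem_coe, Finset.mem_product, Finset.mem_range]
      rw [← hpc, ← hpd, ← hpf, ← hpb,
        hval _ (hb2 c hcn), hval _ (hb2 d hdn), hval _ (hb3 f hfn), hval _ (hb1 b hbn),
        Nat.mul_div_cancel_left c (by omega : 0 < r - 1),
        Nat.mul_div_cancel_left d (by omega : 0 < r - 1),
        Nat.mul_div_cancel_left f hr0,
        Nat.mul_div_cancel_left b (by positivity : 0 < r * n)]
      refine ⟨hcn, ?_, hfn, hbn⟩
      rw [Nat.div_lt_iff_lt_mul hr0, mul_comm (n / r) r, hq]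
      exact hdn
    · -- hj : imap maps A into filter
      intro x hx
      obtain ⟨c, jx, f, b⟩ := x
      simp only [Finset.mem_coe, Finset.mem_product, Finset.mem_range] at hx
      obtain ⟨hc, hj, hf, hb⟩ := hx
      simp only [imap, Finset.mem_coe, Finset.mem_filter, Finset.mem_product, Finset.mem_image,
        Finset.mem_range]
      refine ⟨⟨⟨aa n r c jx f b, aa_lt n r c jx f b hn0, rfl⟩,
        ⟨b, hb, rfl⟩, ⟨c, hc, rfl⟩,
        ⟨dd r c jx, dd_lt n r c jx hr0 hj hq, rfl⟩,
        ⟨ee n r c jx f, ee_lt n r c jx f hn0, rfl⟩, ⟨f, hf, rfl⟩⟩, ?_⟩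
      apply helper1
      obtain ⟨k, hk⟩ := forward n r c jx f b hn0
      exact ⟨k, by push_cast [Nat.cast_sub hr1]; linear_combination hk⟩
    · -- left inverse : imap (jmap p) = p for p in filter
      intro p hp
      simp only [Finset.mem_coe, Finset.mem_filter, Finset.mem_product, Finset.mem_image,
        Finset.mem_range] at hp
      obtain ⟨⟨⟨a, han, hpa⟩, ⟨b, hbn, hpb⟩, ⟨c, hcn, hpc⟩, ⟨d, hdn, hpd⟩,
        ⟨e, hen, hpe⟩, ⟨f, hfn, hpf⟩⟩, heq⟩ := hp
      have hjp : jmap n r p = (c, d / r, f, b) := by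
        simp only [jmap]
        rw [← hpc, ← hpd, ← hpf, ← hpb,
          hval _ (hb2 c hcn), hval _ (hb2 d hdn), hval _ (hb3 f hfn), hval _ (hb1 b hbn),
          Nat.mul_div_cancel_left c (by omega : 0 < r - 1),
          Nat.mul_div_cancel_left d (by omega : 0 < r - 1),
          Nat.mul_div_cancel_left f hr0,
          Nat.mul_div_cancel_left b (by positivity : 0 < r * n)]
      rw [← hpa, ← hpb, ← hpc, ← hpd, ← hpe, ← hpf] at heq
      have hdvdZ : ((r : ℤ) * (n : ℤ) ^ 2) ∣
          ((r : ℤ) * n * a + ((r : ℤ) - 1) * c + r * f)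
            - ((r : ℤ) * n * b + ((r : ℤ) - 1) * d + r * e) := by
        obtain ⟨k, hk⟩ := helper2 (r * n ^ 2) (r * n * a) (r * n * b)
          ((r - 1) * c) ((r - 1) * d) (r * e) (r * f) heq
        exact ⟨k, by push_cast [Nat.cast_sub hr1] at hk; linear_combination hk⟩
      obtain ⟨hmod, hdd, hee, haa⟩ := backward n r a b c d e f hr hn0 han hen hdvdZ
      rw [hjp]
      simp only [imap, Prod.ext_iff]
      refine ⟨?_, ?_, ?_, ?_, ?_, ?_⟩
      · rw [← haa]; exact hpa
      · exact hpb
      · exact hpc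
      · rw [hdd]; exact hpd
      · rw [← hee]; exact hpe
      · exact hpf
    · -- right inverse : jmap (imap x) = x for x in A
      intro x hx
      obtain ⟨c, jx, f, b⟩ := x
      simp only [Finset.mem_coe, Finset.mem_product, Finset.mem_range] at hx
      obtain ⟨hc, hj, hf, hb⟩ := hx
      simp only [imap, jmap]
      rw [hval _ (hb2 c hc), hval _ (hb2 _ (dd_lt n r c jx hr0 hj hq)),
        hval _ (hb3 f hf), hval _ (hb1 b hb),
        Nat.mul_div_cancel_left c (by omega : 0 < r - 1),
        Nat.mul_div_cancel_left (dd r c jx) (by omega : 0 < r - 1),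
        Nat.mul_div_cancel_left f hr0,
        Nat.mul_div_cancel_left b (by positivity : 0 < r * n)]
      simp only [dd, Nat.add_mul_div_left _ _ hr0,
        Nat.div_eq_of_lt (Nat.mod_lt c hr0), zero_add]
  · simp only [Finset.card_product, Finset.card_range]
    ring
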